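/- If a sequence a : ℕ → ℕ is nondecreasing and eventually a quasi-polynomial of degree k-1, then a(n) ~ c·n^(k-1) for some positive real constant c (the leading coefficient functions are eventually constant). -/

import Mathlib

open Filter

private lemma aux_eval_div (p : Polynomial ℝ) (d : ℕ) (h : p.degree ≤ d) :
    Tendsto (fun x : ℝ => p.eval x / x ^ d) atTop (nhds (p.coeff d)) := by
  have hr : (p - Polynomial.C (p.coeff d) * Polynomial.X ^ d).degree <
      (Polynomial.X ^ d : Polynomial ℝ).degree := by
    rw [Polynomial.degree_X_pow, Polynomial.degree_lt_iff_coeff_zero]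
    intro m hm
    simp only [Polynomial.coeff_sub, Polynomial.coeff_C_mul, Polynomial.coeff_X_pow]
    rcases eq_or_lt_of_le hm with h' | h'
    · simp [← h']
    · rw [Polynomial.coeff_eq_zero_of_degree_lt (h.trans_lt (by exact_mod_cast h')),
        if_neg (by omega)]
      simp
  have h0 := Polynomial.div_tendsto_zero_of_degree_lt _ _ hr
  have h1 := h0.add (tendsto_const_nhds : Tendsto (fun _ : ℝ => p.coeff d) atTop (nhds (p.coeff d)))
  rw [zero_add] at h1
  refine h1.congr' ?_
  filter_upwards [eventually_gt_atTop (0 : ℝ)] with x hx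
  have hxd : x ^ d ≠ 0 := pow_ne_zero d hx.ne'
  simp only [Polynomial.eval_sub, Polynomial.eval_mul, Polynomial.eval_pow, Polynomial.eval_C,
    Polynomial.eval_X]
  field_simp
  ring

set_option maxHeartbeats 1000000 in
theorem quasiPolynomial_monotone_asymptotic
    (k : ℕ) (hk : 0 < k) (a : ℕ → ℕ) (ha : Monotone a)
    (N : ℕ) (hN : 0 < N) (q : Fin N → Polynomial ℝ)
    (hdeg : ∀ i, (q i).degree ≤ (k - 1 : ℕ))
    (hdeg' : ∃ i, (q i).degree = (k - 1 : ℕ))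
    (heq : ∀ᶠ n in atTop, (a n : ℝ) = (q ⟨n % N, Nat.mod_lt n hN⟩).eval (n : ℝ)) :
    ∃ c : ℝ, 0 < c ∧
      Tendsto (fun n : ℕ => (a n : ℝ) / (n : ℝ) ^ (k - 1)) atTop (nhds c) := by
  set d := k - 1 with hd
  set c : Fin N → ℝ := fun i => (q i).coeff d with hc
  have hA : ∀ i, Tendsto (fun x : ℝ => (q i).eval x / x ^ d) atTop (nhds (c i)) :=
    fun i => aux_eval_div (q i) d (hdeg i)
  -- step B: along arithmetic progressions
  have hB : ∀ (i : Fin N) (φ : ℕ → ℕ), Tendsto φ atTop atTop →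
      (∀ n, φ n % N = i.val) →
      Tendsto (fun n => (a (φ n) : ℝ) / (φ n : ℝ) ^ d) atTop (nhds (c i)) := by
    intro i φ hφ hmod
    have hcast : Tendsto (fun n => ((φ n : ℕ) : ℝ)) atTop atTop :=
      tendsto_natCast_atTop_atTop.comp hφ
    refine ((hA i).comp hcast).congr' ?_
    filter_upwards [hφ.eventually heq] with n hn
    have : (⟨φ n % N, Nat.mod_lt _ hN⟩ : Fin N) = i := Fin.ext (hmod n)
    rw [this] at hn
    simp [Function.comp, hn]
  -- all c i equal: c i ≤ c j for all i j
  have hle : ∀ i j : Fin N, c i ≤ c j := by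
    intro i j
    set φ : ℕ → ℕ := fun n => n * N + i.val with hφdef
    set ψ : ℕ → ℕ := fun n => (n + 1) * N + j.val with hψdef
    have hφt : Tendsto φ atTop atTop :=
      tendsto_atTop_mono (fun n => by
        simp only [hφdef]
        calc n ≤ n * N := Nat.le_mul_of_pos_right n hN
        _ ≤ n * N + i.val := Nat.le_add_right _ _) tendsto_id
    have hψt : Tendsto ψ atTop atTop :=
      tendsto_atTop_mono (fun n => by
        simp only [hψdef]
        calc n ≤ (n + 1) * N := le_trans (Nat.le_succ n) (Nat.le_mul_of_pos_right _ hN)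
        _ ≤ (n + 1) * N + j.val := Nat.le_add_right _ _) tendsto_id
    have hφm : ∀ n, φ n % N = i.val := fun n => by
      simp only [hφdef]
      rw [Nat.add_comm, Nat.add_mul_mod_self_right, Nat.mod_eq_of_lt i.isLt]
    have hψm : ∀ n, ψ n % N = j.val := fun n => by
      simp only [hψdef]
      rw [Nat.add_comm, Nat.add_mul_mod_self_right, Nat.mod_eq_of_lt j.isLt]
    have hφψ : ∀ n, φ n ≤ ψ n := fun n => by
      have h1 := i.isLt
      have h2 : (n + 1) * N = n * N + N := by ring
      simp only [hφdef, hψdef]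
      omega
    -- ratio tends to 1
    have hratio : Tendsto (fun n => ((ψ n : ℝ) ^ d / (φ n : ℝ) ^ d)) atTop (nhds 1) := by
      have h1 : Tendsto (fun n => (ψ n : ℝ) / (φ n : ℝ)) atTop (nhds 1) := by
        have he : ∀ n, (ψ n : ℝ) = (φ n : ℝ) + (N + j.val - i.val : ℕ) := by
          intro n
          have : ψ n = φ n + (N + j.val - i.val) := by
            simp only [hφdef, hψdef]
            have h1 := i.isLt
            have h2 : (n + 1) * N = n * N + N := by ring
            omega
          rw [this]; push_cast; ring
        have h2 : Tendsto (fun n => ((N + j.val - i.val : ℕ) : ℝ) / (φ n : ℝ)) atTop (nhds 0) :=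
          (tendsto_const_div_atTop_nhds_zero_nat _).comp hφt
        have h3 := h2.const_add (1 : ℝ)
        rw [add_zero] at h3
        refine h3.congr' ?_
        filter_upwards [hφt.eventually (eventually_gt_atTop 0)] with n hn
        have hφ0 : (φ n : ℝ) ≠ 0 := Nat.cast_ne_zero.mpr hn.ne'
        rw [he n]
        field_simp
      have := h1.pow d
      rw [one_pow] at this
      exact this.congr fun n => div_pow _ _ d
    -- eventual inequality
    have hineq : ∀ᶠ n in atTop,
        (a (φ n) : ℝ) / (φ n : ℝ) ^ d ≤
          ((a (ψ n) : ℝ) / (ψ n : ℝ) ^ d) * ((ψ n : ℝ) ^ d / (φ n : ℝ) ^ d) := by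
      filter_upwards [hφt.eventually (eventually_gt_atTop 0),
        hψt.eventually (eventually_gt_atTop 0)] with n hφ0 hψ0
      have hφp : (0 : ℝ) < (φ n : ℝ) ^ d := by positivity
      have hψp : (0 : ℝ) < (ψ n : ℝ) ^ d := by positivity
      rw [div_mul_div_comm, mul_comm ((ψ n : ℝ) ^ d), ← div_mul_div_comm,
        div_self hψp.ne', mul_one]
      gcongr
      exact_mod_cast ha (hφψ n)
    have hR : Tendsto (fun n => ((a (ψ n) : ℝ) / (ψ n : ℝ) ^ d) *
        ((ψ n : ℝ) ^ d / (φ n : ℝ) ^ d)) atTop (nhds (c j * 1)) :=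
      (hB j ψ hψt hψm).mul hratio
    rw [mul_one] at hR
    exact le_of_tendsto_of_tendsto (hB i φ hφt hφm) hR hineq
  obtain ⟨i0, hi0⟩ := hdeg'
  have hceq : ∀ i, c i = c i0 := fun i => le_antisymm (hle i i0) (hle i0 i)
  -- positivity
  have hc0 : c i0 ≠ 0 := Polynomial.coeff_ne_zero_of_eq_degree hi0
  have hcnn : 0 ≤ c i0 := by
    have hφt : Tendsto (fun n => n * N + i0.val) atTop atTop :=
      tendsto_atTop_mono (fun n => by
        calc n ≤ n * N := Nat.le_mul_of_pos_right n hN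
        _ ≤ n * N + i0.val := Nat.le_add_right _ _) tendsto_id
    refine ge_of_tendsto (hB i0 _ hφt (fun n => by
      rw [Nat.add_comm, Nat.add_mul_mod_self_right, Nat.mod_eq_of_lt i0.isLt])) ?_
    filter_upwards with n
    positivity
  have hcpos : 0 < c i0 := lt_of_le_of_ne hcnn (Ne.symm hc0)
  refine ⟨c i0, hcpos, ?_⟩
  -- final convergence
  rw [Metric.tendsto_atTop]
  intro ε hε
  have hA' : ∀ i, Tendsto (fun x : ℝ => (q i).eval x / x ^ d) atTop (nhds (c i0)) := by
    intro i; rw [← hceq i]; exact hA i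
  have hX : ∀ i : Fin N, ∃ X : ℝ, ∀ x ≥ X, dist ((q i).eval x / x ^ d) (c i0) < ε := by
    intro i
    obtain ⟨X, hX⟩ := (Metric.tendsto_atTop.mp (hA' i)) ε hε
    exact ⟨X, hX⟩
  choose X hXs using hX
  haveI : Nonempty (Fin N) := ⟨⟨0, hN⟩⟩
  set M : ℝ := Finset.univ.sup' Finset.univ_nonempty X with hM
  obtain ⟨n1, hn1⟩ := eventually_atTop.mp heq
  obtain ⟨m, hm⟩ := exists_nat_ge M
  refine ⟨max n1 m, fun n hn => ?_⟩
  have hn1' : n1 ≤ n := le_trans (le_max_left _ _) hn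
  have hmn : (M : ℝ) ≤ (n : ℝ) := le_trans hm (by exact_mod_cast le_trans (le_max_right _ _) hn)
  rw [hn1 n hn1']
  exact hXs ⟨n % N, Nat.mod_lt n hN⟩ (n : ℝ)
    (le_trans (Finset.le_sup' X (Finset.mem_univ _)) hmn)
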